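/- A linear code C ≤ F_q^n is intersecting if and only if the vertical connectivity of its associated matroid equals dim(C), i.e. the matroid has no vertical j-separation for any j ∈ {1, …, dim(C)−1}. -/

import Mathlib

open Module Submodule Matrix

section Aux
variable {F : Type*} [Field F] {n k : ℕ}

/-- masking linear map -/
noncomputable def maskL (F : Type*) [Field F] {n : ℕ} (A : Finset (Fin n)) :
    (Fin n → F) →ₗ[F] (Fin n → F) where
  toFun v := fun i => if i ∈ A then v i else 0
  map_add' := by intro x y; funext i; by_cases h : i ∈ A <;> simp [h]
  map_smul' := by intro c x; funext i; by_cases h : i ∈ A <;> simp [h]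

lemma maskL_apply (A : Finset (Fin n)) (v : Fin n → F) (i : Fin n) :
    maskL F A v i = if i ∈ A then v i else 0 := rfl

lemma rank_eq_finrank_map_mask (G : Matrix (Fin k) (Fin n) F) (A : Finset (Fin n)) :
    finrank F (span F ((fun j : Fin n => fun i : Fin k => G i j) '' (A : Set (Fin n)))) =
    finrank F ((span F (Set.range G)).map (maskL F A)) := by
  classical
  set M : Matrix (Fin k) (Fin n) F := fun i j => if j ∈ A then G i j else 0 with hM
  have hcols : span F ((fun j : Fin n => fun i : Fin k => G i j) '' (A : Set (Fin n)))
      = span F (Set.range Mᵀ) := by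
    apply le_antisymm
    · rw [span_le]
      rintro _ ⟨j, hj, rfl⟩
      have hj' : j ∈ A := hj
      apply subset_span
      refine ⟨j, ?_⟩
      funext i
      simp [hM, Matrix.transpose, hj']
    · rw [span_le]
      rintro _ ⟨j, rfl⟩
      by_cases hj : j ∈ A
      · apply subset_span
        refine ⟨j, hj, ?_⟩
        funext i
        simp [hM, Matrix.transpose, hj]
      · have : Mᵀ j = 0 := by funext i; simp [hM, Matrix.transpose, hj]
        rw [this]; exact zero_mem _
  have hrows : (span F (Set.range G)).map (maskL F A) = span F (Set.range M) := by
    have hc : (⇑(maskL F A)) ∘ G = M := by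
      funext i x
      rfl
    rw [Submodule.map_span, ← hc]
    exact congrArg (span F) (Set.range_comp _ _).symm
  rw [hcols, show span F (Set.range Mᵀ) = span F (Set.range M.col) from rfl,
    ← Matrix.rank_eq_finrank_span_cols, Matrix.rank_eq_finrank_span_row, hrows]
  rfl

lemma finrank_map_add (C : Submodule F (Fin n → F)) (f : (Fin n → F) →ₗ[F] (Fin n → F)) :
    finrank F (C.map f) + finrank F (LinearMap.ker (f.domRestrict C)) = finrank F C := by
  have h := LinearMap.finrank_range_add_finrank_ker (f.domRestrict C)
  rwa [LinearMap.range_domRestrict] at h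

lemma finrank_pos_of_mem {V : Type*} [AddCommGroup V] [Module F V] [FiniteDimensional F V]
    {x : V} {p : Submodule F V} (hx : x ∈ p) (hx0 : x ≠ 0) : 0 < finrank F p := by
  rw [Module.finrank_pos_iff]
  exact nontrivial_of_ne ⟨x, hx⟩ 0 (by simp [Subtype.ext_iff, hx0])

lemma finrank_map_lt_of_ker (C : Submodule F (Fin n → F)) (f : (Fin n → F) →ₗ[F] (Fin n → F))
    {w : Fin n → F} (hwC : w ∈ C) (hw0 : w ≠ 0) (hfw : f w = 0) :
    finrank F (C.map f) < finrank F C := by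
  have h2 := finrank_map_add C f
  have hker : 0 < finrank F (LinearMap.ker (f.domRestrict C)) := by
    apply finrank_pos_of_mem (x := (⟨w, hwC⟩ : C)) (p := LinearMap.ker (f.domRestrict C))
    · simpa [LinearMap.mem_ker] using hfw
    · simp [Subtype.ext_iff, hw0]
  omega

lemma exists_ker_of_finrank_map_lt (C : Submodule F (Fin n → F))
    (f : (Fin n → F) →ₗ[F] (Fin n → F)) (h : finrank F (C.map f) < finrank F C) :
    ∃ w ∈ C, w ≠ 0 ∧ f w = 0 := by
  have h2 := finrank_map_add C f
  have hker : 0 < finrank F (LinearMap.ker (f.domRestrict C)) := by omega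
  have hker := Module.nontrivial_of_finrank_pos hker
  obtain ⟨⟨⟨w, hwC⟩, hker'⟩, hx⟩ := exists_ne (0 : LinearMap.ker (f.domRestrict C))
  refine ⟨w, hwC, ?_, ?_⟩
  · intro h0
    exact hx (by simp [Subtype.ext_iff, h0])
  · simpa [LinearMap.mem_ker, LinearMap.domRestrict_apply] using hker'

end Aux

/-- A linear code C ≤ F_q^n is intersecting if and only if the
vertical connectivity of its associated matroid equals dim C, i.e. the matroid
has no vertical j-separation for any j ∈ {1, …, dim C − 1}. -/
theorem intersecting_iff_full_vertical_connectivity {F : Type*} [Field F] [DecidableEq F]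
    {n k : ℕ} (C : Submodule F (Fin n → F)) (G : Matrix (Fin k) (Fin n) F)
    (hG : Submodule.span F (Set.range G) = C)
    (r : Finset (Fin n) → ℕ)
    (hr : ∀ A : Finset (Fin n),
      r A = Module.finrank F (Submodule.span F
        ((fun j : Fin n => fun i : Fin k => G i j) '' (A : Set (Fin n))))) :
    (∀ v ∈ C, ∀ w ∈ C, v ≠ 0 → w ≠ 0 →
        ({i | v i ≠ 0} ∩ {i | w i ≠ 0}).Nonempty)
    ↔ (∀ j : ℕ, 1 ≤ j → j + 1 ≤ Module.finrank F C →
        ¬ ∃ X : Finset (Fin n),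
            j ≤ min (r X) (r Xᶜ) ∧ r X + r Xᶜ - r Finset.univ < j) := by
  classical
  have hrank : ∀ A : Finset (Fin n), r A = finrank F (C.map (maskL F A)) := by
    intro A; rw [hr A, rank_eq_finrank_map_mask, hG]
  have hruniv : r (Finset.univ : Finset (Fin n)) = finrank F C := by
    have hid : maskL F (Finset.univ : Finset (Fin n)) = LinearMap.id := by
      apply LinearMap.ext; intro v; funext i; simp [maskL_apply]
    rw [hrank, hid, Submodule.map_id]
  constructor
  · rintro hint j hj1 _ ⟨X, hmin, hlt⟩
    rw [hruniv] at hlt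
    have hminX := le_min_iff.mp hmin
    have hX : r X < finrank F C := by omega
    have hXc : r Xᶜ < finrank F C := by omega
    obtain ⟨v, hvC, hv0, hfv⟩ := exists_ker_of_finrank_map_lt C (maskL F Xᶜ)
      (by rw [← hrank]; exact hXc)
    obtain ⟨w, hwC, hw0, hfw⟩ := exists_ker_of_finrank_map_lt C (maskL F X)
      (by rw [← hrank]; exact hX)
    obtain ⟨i, hiv, hiw⟩ := hint v hvC w hwC hv0 hw0
    by_cases hi : i ∈ X
    · have h0 := congrFun hfw i
      rw [maskL_apply] at h0
      simp only [hi, if_true, Pi.zero_apply] at h0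
      exact hiw h0
    · have h0 := congrFun hfv i
      rw [maskL_apply] at h0
      simp only [Finset.mem_compl, hi, not_false_iff, if_true, Pi.zero_apply] at h0
      exact hiv h0
  · intro h v hvC w hwC hv0 hw0
    by_contra hdisj
    rw [Set.not_nonempty_iff_eq_empty, Set.eq_empty_iff_forall_notMem] at hdisj
    set X : Finset (Fin n) := Finset.univ.filter (fun i => v i ≠ 0) with hXdef
    have hvX : ∀ i, i ∉ X → v i = 0 := by
      intro i hi
      by_contra h'
      exact hi (by simp [hXdef, h'])
    have hwX : ∀ i ∈ X, w i = 0 := by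
      intro i hi
      have hvi : v i ≠ 0 := by simpa [hXdef] using hi
      by_contra h'
      exact hdisj i ⟨hvi, h'⟩
    have hmw : maskL F X w = 0 := by
      funext i
      show (if i ∈ X then w i else 0) = 0
      split
      · exact hwX _ ‹_›
      · rfl
    have hmv : maskL F Xᶜ v = 0 := by
      funext i
      show (if i ∈ Xᶜ then v i else 0) = 0
      split
      · exact hvX _ (Finset.mem_compl.mp ‹_›)
      · rfl
    have h1 : finrank F (C.map (maskL F X)) < finrank F C :=
      finrank_map_lt_of_ker C _ hwC hw0 hmw
    have h2 : finrank F (C.map (maskL F Xᶜ)) < finrank F C :=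
      finrank_map_lt_of_ker C _ hvC hv0 hmv
    have h3 : 0 < finrank F (C.map (maskL F X)) := by
      refine finrank_pos_of_mem (x := v) ⟨v, hvC, ?_⟩ hv0
      funext i
      show (if i ∈ X then v i else 0) = v i
      split
      · rfl
      · exact (hvX _ ‹_›).symm
    have h4 : 0 < finrank F (C.map (maskL F Xᶜ)) := by
      refine finrank_pos_of_mem (x := w) ⟨w, hwC, ?_⟩ hw0
      funext i
      show (if i ∈ Xᶜ then w i else 0) = w i
      split
      · rfl
      · exact (hwX _ (by simpa using ‹i ∉ Xᶜ›)).symm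
    rw [← hrank X] at h1 h3
    rw [← hrank Xᶜ] at h2 h4
    exact h (r X + r Xᶜ - r Finset.univ + 1) (by omega) (by omega)
      ⟨X, by omega, by omega⟩
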